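/- Bias formula for the Chebyshev estimator under Poisson sampling: with n(a) ~ Poi(n π_b(a)) independently and V̂_C = Σ_a π_t(a) r̂(a) g_L(n(a)), where g_L(j) = a_j·j!/n^j + 1 for 0 ≤ j ≤ L (in particular g_L(0) = 0) and g_L(j) = 1 for j > L, the bias equals E[V̂_C] − V(π_t) = Σ_a π_t(a) r(a) e^{−n π_b(a)} P_L(π_b(a)), where P_L(x) = Σ_{d=0}^L a_d x^d is the shifted/scaled Chebyshev polynomial P_L(x) = −Q_L((2x−r−ℓ)/(r−ℓ)) / Q_L((−r−ℓ)/(r−ℓ)). -/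

import Mathlib

open MeasureTheory Polynomial

open Polynomial.Chebyshev in
lemma cheb_deg' : ∀ L : ℕ, (T ℝ (L : ℤ)).natDegree ≤ L ∧ (T ℝ ((L : ℤ) + 1)).natDegree ≤ L + 1 := by
  intro L
  induction L with
  | zero => constructor <;> simp [T_zero, T_one]
  | succ m ih =>
    refine ⟨by exact_mod_cast ih.2, ?_⟩
    have h := T_add_two ℝ (m : ℤ)
    have e2 : ((m : ℕ) + 1 : ℤ) + 1 = (m : ℤ) + 2 := by push_cast; ring
    push_cast
    rw [e2, h]
    refine le_trans (natDegree_sub_le _ _) ?_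
    simp only [max_le_iff]
    refine ⟨le_trans natDegree_mul_le ?_, le_trans ih.1 (by omega)⟩
    have h1 : (2 * X : ℝ[X]).natDegree ≤ 1 := le_trans natDegree_mul_le (by simp)
    have := ih.2
    omega

open Polynomial.Chebyshev in
lemma cheb_neg_big' : ∀ (L : ℕ) (x : ℝ), x ≤ -1 →
    (1 ≤ (-1 : ℝ) ^ L * (T ℝ (L : ℤ)).eval x ∧
     (-1 : ℝ) ^ L * (T ℝ (L : ℤ)).eval x ≤ (-1 : ℝ) ^ (L + 1) * (T ℝ ((L : ℤ) + 1)).eval x) := by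
  intro L
  induction L with
  | zero =>
    intro x hx
    norm_num [T_zero, T_one]
    linarith
  | succ m ih =>
    intro x hx
    obtain ⟨h1, h2⟩ := ih x hx
    have h := T_add_two ℝ (m : ℤ)
    have e2 : ((m : ℤ) + 1 + 1) = (m : ℤ) + 2 := by ring
    push_cast
    rw [e2, h]
    simp only [eval_sub, eval_mul, eval_ofNat, eval_X]
    set A := eval x (T ℝ (m : ℤ)) with hA
    set B := eval x (T ℝ ((m : ℤ) + 1)) with hB
    have hp : (-1:ℝ)^(m+1) = -((-1:ℝ)^m) := by ring
    have hpp : (-1:ℝ)^(m+1+1) = (-1:ℝ)^m := by ring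
    rw [hp] at h2 ⊢
    rw [hpp]
    set c := (-1:ℝ)^m with hc
    have hc2 : c * c = 1 := by rw [hc, ← pow_add]; simp [pow_mul_comm, ← two_mul, pow_mul]
    constructor
    · linarith
    · have expand : c * (2 * x * B - A) = -(2 * x) * (-(c * B)) - c * A := by ring
      rw [expand]
      nlinarith

lemma cheb_ne_zero' (L : ℕ) (x : ℝ) (hx : x ≤ -1) :
    (Polynomial.Chebyshev.T ℝ (L : ℤ)).eval x ≠ 0 := by
  have := (cheb_neg_big' L x hx).1
  intro h0
  rw [h0, mul_zero] at this
  linarith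

theorem chebyshev_estimator_bias
    (k n L : ℕ) (hn : 0 < n)
    (ℓ r' rmax : ℝ) (hℓ : 0 < ℓ) (hlr : ℓ < r') (hrmax : 0 ≤ rmax)
    (πb πt r : Fin k → ℝ)
    (hπb : ∀ a, 0 < πb a) (hπb1 : ∑ a, πb a = 1)
    (hπt : ∀ a, 0 ≤ πt a) (hπt1 : ∑ a, πt a = 1)
    (P : Polynomial ℝ)
    (hP : P = Polynomial.C
          (-(1 / ((Polynomial.Chebyshev.T ℝ (L : ℤ)).eval ((-r' - ℓ) / (r' - ℓ))))) *
        ((Polynomial.Chebyshev.T ℝ (L : ℤ)).comp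
          (Polynomial.C (2 / (r' - ℓ)) * Polynomial.X
            - Polynomial.C ((r' + ℓ) / (r' - ℓ)))))
    (g : ℕ → ℝ)
    (hg : ∀ j, g j =
      if j ≤ L then P.coeff j * (j.factorial : ℝ) / (n : ℝ) ^ j + 1 else 1)
    (μ : Fin k → Measure (ℕ × ℝ)) (hprob : ∀ a, IsProbabilityMeasure (μ a))
    (hcount : ∀ a (j : ℕ), ((μ a) {p | p.1 = j}).toReal =
      Real.exp (-((n : ℝ) * πb a)) * ((n : ℝ) * πb a) ^ j / (j.factorial : ℝ))
    (hmean : ∀ a (j : ℕ), 1 ≤ j →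
      (∫ p in {p : ℕ × ℝ | p.1 = j}, p.2 ∂(μ a)) =
        (Real.exp (-((n : ℝ) * πb a)) * ((n : ℝ) * πb a) ^ j / (j.factorial : ℝ)) * r a)
    (hzero : ∀ a, (∫ p in {p : ℕ × ℝ | p.1 = 0}, p.2 ∂(μ a)) = 0)
    (hint : ∀ a, Integrable (fun p : ℕ × ℝ => p.2 * g p.1) (μ a)) :
    (∑ a, πt a * ∫ p : ℕ × ℝ, p.2 * g p.1 ∂(μ a)) - (∑ a, πt a * r a)
      = ∑ a, πt a * r a * Real.exp (-((n : ℝ) * πb a)) * P.eval (πb a) := by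
  -- basic facts about the polynomial P
  have hsub : (0:ℝ) < r' - ℓ := by linarith
  have hx0 : (-r' - ℓ) / (r' - ℓ) ≤ -1 := by
    rw [div_le_iff₀ hsub]; linarith
  have hTne : (Polynomial.Chebyshev.T ℝ (L : ℤ)).eval ((-r' - ℓ) / (r' - ℓ)) ≠ 0 :=
    cheb_ne_zero' L _ hx0
  have hc0 : P.coeff 0 = -1 := by
    rw [coeff_zero_eq_eval_zero, hP]
    simp only [eval_mul, eval_C, eval_comp, eval_sub, eval_X, mul_zero]
    rw [show (0:ℝ) - (r' + ℓ) / (r' - ℓ) = (-r' - ℓ) / (r' - ℓ) by ring]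
    field_simp
  have hdeg : P.natDegree ≤ L := by
    rw [hP]
    refine le_trans natDegree_mul_le ?_
    rw [natDegree_C, zero_add, natDegree_comp]
    have h1 : (Polynomial.C (2 / (r' - ℓ)) * Polynomial.X
        - Polynomial.C ((r' + ℓ) / (r' - ℓ))).natDegree ≤ 1 := by
      refine le_trans (natDegree_sub_le _ _) ?_
      simp only [max_le_iff, natDegree_C]
      exact ⟨le_trans natDegree_mul_le (by simp), by omega⟩
    calc (Polynomial.Chebyshev.T ℝ (L : ℤ)).natDegree *
          (Polynomial.C (2 / (r' - ℓ)) * Polynomial.X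
            - Polynomial.C ((r' + ℓ) / (r' - ℓ))).natDegree
        ≤ L * 1 := Nat.mul_le_mul (cheb_deg' L).1 h1
      _ = L := by omega
  -- per-action computation
  have key : ∀ a, (∫ p : ℕ × ℝ, p.2 * g p.1 ∂(μ a))
      = r a + r a * Real.exp (-((n : ℝ) * πb a)) * P.eval (πb a) := by
    intro a
    set m : ℝ := (n : ℝ) * πb a with hm
    set Poi : ℕ → ℝ := fun j => Real.exp (-m) * m ^ j / (j.factorial : ℝ) with hPoi
    set s : ℕ → Set (ℕ × ℝ) := fun j => {p : ℕ × ℝ | p.1 = j} with hs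
    have hms : ∀ j, MeasurableSet (s j) := fun j =>
      measurable_fst (measurableSet_singleton j)
    have hdisj : Pairwise (Function.onFun Disjoint s) := by
      intro i j hij
      refine Set.disjoint_left.mpr ?_
      intro p hpi hpj
      exact hij ((hpi : p.1 = i).symm.trans (hpj : p.1 = j))
    have hunion : (⋃ j, s j) = Set.univ := by
      ext p; simp [hs]
    -- the integral as a sum over the fibers
    have hHas : HasSum (fun j => ∫ p in s j, p.2 * g p.1 ∂(μ a))
        (∫ p : ℕ × ℝ, p.2 * g p.1 ∂(μ a)) := by
      have := hasSum_integral_iUnion hms hdisj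
        (f := fun p : ℕ × ℝ => p.2 * g p.1) (μ := μ a)
        (by rw [hunion]; exact (hint a).integrableOn)
      rwa [hunion, setIntegral_univ] at this
    have hFib : ∀ j, (∫ p in s j, p.2 * g p.1 ∂(μ a))
        = (∫ p in s j, p.2 ∂(μ a)) * g j := by
      intro j
      rw [← integral_mul_const]
      refine setIntegral_congr_fun (hms j) ?_
      intro p hp
      have hp1 : p.1 = j := hp
      show p.2 * g p.1 = p.2 * g j
      rw [hp1]
    set F : ℕ → ℝ := fun j => (∫ p in s j, p.2 ∂(μ a)) * g j with hF
    have hHasF : HasSum F (∫ p : ℕ × ℝ, p.2 * g p.1 ∂(μ a)) := by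
      exact hHas.congr_fun fun j => (hFib j).symm
    -- Poisson probabilities sum to 1
    have hμsum : ∑' j, μ a (s j) = 1 := by
      rw [← measure_iUnion hdisj hms, hunion, measure_univ]
    have hPoiEq : ∀ j, (μ a (s j)).toReal = Poi j := fun j => hcount a j
    have hPoiSummable : Summable Poi := by
      have := ENNReal.summable_toReal (f := fun j => μ a (s j))
        (by rw [hμsum]; exact ENNReal.one_ne_top)
      exact this.congr hPoiEq
    have hPoiSum : ∑' j, Poi j = 1 := by
      have h1 : ∑' j, (μ a (s j)).toReal = ((∑' j, μ a (s j))).toReal :=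
        (ENNReal.tsum_toReal_eq fun j => measure_ne_top _ _).symm
      have := h1.symm ▸ (by rw [hμsum]; simp : ((∑' j, μ a (s j))).toReal = (1:ℝ))
      calc ∑' j, Poi j = ∑' j, (μ a (s j)).toReal := by
            exact tsum_congr fun j => (hPoiEq j).symm
        _ = 1 := by rw [h1, hμsum]; simp
    -- deviation term
    set D : ℕ → ℝ := fun j => F j - r a * Poi j with hD
    have hDval : ∀ j, D j = if j ≤ L
        then r a * Real.exp (-m) * (P.coeff j * (πb a) ^ j) else 0 := by
      intro j
      have hnne : (n : ℝ) ≠ 0 := Nat.cast_ne_zero.mpr hn.ne'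
      have hfacne : ((j.factorial : ℝ)) ≠ 0 := Nat.cast_ne_zero.mpr j.factorial_ne_zero
      rcases Nat.eq_zero_or_pos j with rfl | hj
      · have hF0 : F 0 = 0 := by
          simp only [hF]
          rw [show s 0 = {p : ℕ × ℝ | p.1 = 0} from rfl, hzero a, zero_mul]
        rw [if_pos (Nat.zero_le L), hc0]
        simp only [hD, hF0, hPoi]
        simp only [pow_zero, Nat.factorial_zero, Nat.cast_one, mul_one, div_one]
        ring
      · have hFj : F j = Poi j * r a * g j := by
          simp only [hF, hPoi]
          rw [show s j = {p : ℕ × ℝ | p.1 = j} from rfl, hmean a j hj]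
        by_cases hjL : j ≤ L
        · rw [if_pos hjL]
          have hgj : g j = P.coeff j * (j.factorial : ℝ) / (n : ℝ) ^ j + 1 := by
            rw [hg j, if_pos hjL]
          have key2 : Poi j * ((j.factorial : ℝ) / (n : ℝ) ^ j)
              = Real.exp (-m) * (πb a) ^ j := by
            have h1 : m ^ j = (n : ℝ) ^ j * (πb a) ^ j := by rw [hm, mul_pow]
            simp only [hPoi]
            rw [h1]
            field_simp
          simp only [hD]
          rw [hFj, hgj]
          calc Poi j * r a * (P.coeff j * (j.factorial : ℝ) / (n : ℝ) ^ j + 1)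
                - r a * Poi j
              = r a * P.coeff j * (Poi j * ((j.factorial : ℝ) / (n : ℝ) ^ j)) := by
                ring
            _ = r a * Real.exp (-m) * (P.coeff j * (πb a) ^ j) := by rw [key2]; ring
        · rw [if_neg hjL]
          have hgj : g j = 1 := by rw [hg j, if_neg hjL]
          simp only [hD]
          rw [hFj, hgj]
          ring
    have hDsupp : ∀ j ∉ Finset.range (L + 1), D j = 0 := by
      intro j hj
      rw [hDval j, if_neg (by simpa [Nat.lt_succ_iff] using hj)]
    have hDsummable : Summable D := summable_of_ne_finset_zero hDsupp
    -- put everything together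
    have hSummableRP : Summable (fun j => r a * Poi j) := hPoiSummable.mul_left _
    have hFsplit : ∀ j, F j = r a * Poi j + D j := by intro j; simp [hD]
    have hPeval : P.eval (πb a) = ∑ j ∈ Finset.range (L + 1), P.coeff j * (πb a) ^ j :=
      eval_eq_sum_range' (Nat.lt_succ_of_le hdeg) _
    have htsum : (∫ p : ℕ × ℝ, p.2 * g p.1 ∂(μ a)) = ∑' j, F j := hHasF.tsum_eq.symm
    rw [htsum]
    calc ∑' j, F j = ∑' j, (r a * Poi j + D j) := tsum_congr hFsplit
      _ = (∑' j, r a * Poi j) + ∑' j, D j := Summable.tsum_add hSummableRP hDsummable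
      _ = r a * (∑' j, Poi j) + ∑ j ∈ Finset.range (L + 1), D j := by
          rw [tsum_mul_left, tsum_eq_sum hDsupp]
      _ = r a + r a * Real.exp (-m) *
            ∑ j ∈ Finset.range (L + 1), P.coeff j * (πb a) ^ j := by
          rw [hPoiSum, mul_one, Finset.mul_sum]
          congr 1
          refine Finset.sum_congr rfl fun j hj => ?_
          rw [hDval j, if_pos (by simpa [Nat.lt_succ_iff] using hj)]
      _ = r a + r a * Real.exp (-m) * P.eval (πb a) := by rw [hPeval]
  calc (∑ a, πt a * ∫ p : ℕ × ℝ, p.2 * g p.1 ∂(μ a)) - (∑ a, πt a * r a)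
      = ∑ a, (πt a * (r a + r a * Real.exp (-((n : ℝ) * πb a)) * P.eval (πb a))
          - πt a * r a) := by
        rw [← Finset.sum_sub_distrib]
        exact Finset.sum_congr rfl fun a _ => by rw [key a]
    _ = ∑ a, πt a * r a * Real.exp (-((n : ℝ) * πb a)) * P.eval (πb a) := by
        exact Finset.sum_congr rfl fun a _ => by ring
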